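/- In the lazy tournament of a trivalent tree T whose leaf edges a and b share a vertex (and n ≥ 1), neither a nor b ever competes in any round, every other label competes in at least one round, and whenever a label advances (is written on a new edge E) the edge E is the next edge along that label's current path toward the leaf a (Participation Lemma). -/

import Mathlib

open SimpleGraph

/-- A candidate leaf-labeled graph on vertex set `Fin V` with `L` labeled leaves. -/
structure PreTree (L V : ℕ) where
  adj : Fin V → Fin V → Bool
  symm' : ∀ u v, adj u v = adj v u
  loopless' : ∀ v, adj v v = false
  leaf : Fin L → Fin V

def PreTree.G {L V : ℕ} (T : PreTree L V) : SimpleGraph (Fin V) where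
  Adj u v := T.adj u v = true
  symm := ⟨fun u v h => by show T.adj v u = true; rw [T.symm']; exact h⟩
  loopless := ⟨fun v h => by have h : T.adj v v = true := h; rw [T.loopless' v] at h; exact Bool.noConfusion h⟩

instance {L V : ℕ} (T : PreTree L V) : DecidableRel T.G.Adj :=
  fun u v => inferInstanceAs (Decidable (T.adj u v = true))

/-- `T` is a trivalent tree with leaves labeled bijectively by `Fin L`. -/
def PreTree.IsTrivalent {L V : ℕ} (T : PreTree L V) : Prop :=
  T.G.IsTree ∧ (∀ v, T.G.degree v = 1 ∨ T.G.degree v = 3) ∧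
    Function.Injective T.leaf ∧ (∀ i, T.G.degree (T.leaf i) = 1) ∧
    (∀ v, T.G.degree v = 1 → ∃ i, T.leaf i = v)

/-- Label-preserving isomorphism of leaf-labeled graphs. -/
def PreTree.Iso {L V : ℕ} (T T' : PreTree L V) : Prop :=
  ∃ σ : Fin V ≃ Fin V, (∀ u v, T'.adj (σ u) (σ v) = T.adj u v) ∧ ∀ i, σ (T.leaf i) = T'.leaf i

/-- Leaves `a = 0` and `b = 1` share a common (internal) vertex. -/
def PreTree.ABAdj {n V : ℕ} (T : PreTree (n+3) V) : Prop :=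
  ∃ v, T.G.Adj (T.leaf 0) v ∧ T.G.Adj (T.leaf 1) v

/-- Number of isomorphism classes of leaf-labeled graphs satisfying `P`. -/
noncomputable def classCount {L V : ℕ} (P : PreTree L V → Prop) : ℕ :=
  Nat.card (Quot fun (T T' : {T : PreTree L V // P T}) => PreTree.Iso T.1 T'.1)

/-- `w` separates `x` from `y` in `G`: every walk from `x` to `y` passes through `w`. -/
def Separates {V : Type*} (G : SimpleGraph V) (w x y : V) : Prop :=
  ∀ p : G.Walk x y, w ∈ p.support

/-- The laziness rule applies: the unlabeled edge `E` is adjacent to a labeled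
edge carrying a label `u ≠ j` with `u > i`. -/
def LazyApplies {n : ℕ} (T : PreTree (n+3) (2*n+4))
    (lab : Sym2 (Fin (2*n+4)) → Option (Fin (n+3)))
    (E : Sym2 (Fin (2*n+4))) (i j : Fin (n+3)) : Prop :=
  ∃ (e : Sym2 (Fin (2*n+4))) (u : Fin (n+3)) (v : Fin (2*n+4)),
    e ∈ T.G.edgeSet ∧ v ∈ e ∧ v ∈ E ∧ e ≠ E ∧ lab e = some u ∧ u ≠ j ∧ i < u

/-- A run of the lazy tournament on a tree with `n+3` leaves (labels ordered
`a = 0 < b = 1 < c = 2 < 1 = 3 < ⋯ < n = n+2` as elements of `Fin (n+3)`).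
`lab t` is the edge labeling before round `t`; round `t` has `loser t < winner t`
on adjacent labeled edges `loserE t`, `winnerE t` sharing vertex `vtx t` with the
unlabeled edge `newE t`, the pair having the maximal smaller label, and `newE t`
gets labeled according to the laziness rule. -/
structure Run (n : ℕ) (T : PreTree (n+3) (2*n+4)) where
  lab : ℕ → Sym2 (Fin (2*n+4)) → Option (Fin (n+3))
  loser : Fin n → Fin (n+3)
  winner : Fin n → Fin (n+3)
  loserE : Fin n → Sym2 (Fin (2*n+4))
  winnerE : Fin n → Sym2 (Fin (2*n+4))
  newE : Fin n → Sym2 (Fin (2*n+4))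
  vtx : Fin n → Fin (2*n+4)
  init_leaf : ∀ (i : Fin (n+3)) (w : Fin (2*n+4)), T.G.Adj (T.leaf i) w →
    lab 0 s(T.leaf i, w) = some i
  init_other : ∀ e : Sym2 (Fin (2*n+4)), (∀ i : Fin (n+3), T.leaf i ∉ e) → lab 0 e = none
  init_nonedge : ∀ e, e ∉ T.G.edgeSet → lab 0 e = none
  lt_lw : ∀ t, loser t < winner t
  loserE_mem : ∀ t, loserE t ∈ T.G.edgeSet
  winnerE_mem : ∀ t, winnerE t ∈ T.G.edgeSet
  newE_mem : ∀ t, newE t ∈ T.G.edgeSet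
  lab_loserE : ∀ t, lab t.1 (loserE t) = some (loser t)
  lab_winnerE : ∀ t, lab t.1 (winnerE t) = some (winner t)
  vtx_mem : ∀ t, vtx t ∈ loserE t ∧ vtx t ∈ winnerE t ∧ vtx t ∈ newE t
  edges_distinct : ∀ t, loserE t ≠ winnerE t ∧ loserE t ≠ newE t ∧ winnerE t ≠ newE t
  newE_unlabeled : ∀ t, lab t.1 (newE t) = none
  max_rule : ∀ (t : Fin n) (e1 e2 e3 : Sym2 (Fin (2*n+4))) (i j : Fin (n+3)) (v : Fin (2*n+4)),
    e1 ∈ T.G.edgeSet → e2 ∈ T.G.edgeSet → e3 ∈ T.G.edgeSet →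
    lab t.1 e1 = some i → lab t.1 e2 = some j → lab t.1 e3 = none → i < j →
    v ∈ e1 → v ∈ e2 → v ∈ e3 → e1 ≠ e2 → e1 ≠ e3 → e2 ≠ e3 →
    i ≤ loser t
  step_lazy : ∀ t : Fin n, LazyApplies T (lab t.1) (newE t) (loser t) (winner t) →
    lab (t.1+1) (newE t) = some (loser t)
  step_nonlazy : ∀ t : Fin n, ¬ LazyApplies T (lab t.1) (newE t) (loser t) (winner t) →
    lab (t.1+1) (newE t) = some (winner t)
  step_frame : ∀ (t : Fin n) (e : Sym2 (Fin (2*n+4))), e ≠ newE t → lab (t.1+1) e = lab t.1 e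

/-- Number of rounds won by label `i`. -/
def Run.wins {n : ℕ} {T : PreTree (n+3) (2*n+4)} (R : Run n T) (i : Fin (n+3)) : ℕ :=
  (Finset.univ.filter fun t : Fin n => R.winner t = i).card

/-- The element of `Fin (n+3)` corresponding to the numeric label `m+1 ∈ {1,…,n}`. -/
def lbl {n : ℕ} (m : Fin n) : Fin (n+3) := ⟨(m:ℕ)+3, by omega⟩

/-- `T ∈ Tour(k₁,…,kₙ)`. -/
def InTour {n : ℕ} (k : Fin n → ℕ) (T : PreTree (n+3) (2*n+4)) : Prop :=
  T.IsTrivalent ∧ T.ABAdj ∧ ∃ R : Run n T, ∀ m : Fin n, R.wins (lbl m) = k m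

/-- `|Tour(k₁,…,kₙ)|` (isomorphism classes). -/
noncomputable def TourCount {n : ℕ} (k : Fin n → ℕ) : ℕ := classCount (InTour k)

/-- `T'` is obtained from `T` by deleting the largest leaf and suppressing
the resulting degree-2 vertex `w`. -/
def DelLast (n : ℕ) (T : PreTree ((n+1)+3) (2*(n+1)+4)) (T' : PreTree (n+3) (2*n+4)) : Prop :=
  ∃ (g : Fin (2*n+4) → Fin (2*(n+1)+4)) (w : Fin (2*(n+1)+4)),
    Function.Injective g ∧
    T.G.Adj (T.leaf (Fin.last (n+3))) w ∧
    (∀ v, v ∈ Set.range g ↔ (v ≠ T.leaf (Fin.last (n+3)) ∧ v ≠ w)) ∧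
    (∀ u u' : Fin (2*n+4), T'.G.Adj u u' ↔
      (T.G.Adj (g u) (g u') ∨ (T.G.Adj (g u) w ∧ T.G.Adj (g u') w ∧ g u ≠ g u'))) ∧
    (∀ i : Fin (n+3), g (T'.leaf i) = T.leaf (Fin.castSucc i))

/-- `T'` is obtained from `T` by successively deleting the leaves `r+1, …, n`. -/
inductive Restricts : (n : ℕ) → (r : ℕ) → PreTree (n+3) (2*n+4) → PreTree (r+3) (2*r+4) → Prop
  | refl (n : ℕ) (T : PreTree (n+3) (2*n+4)) : Restricts n n T T
  | step (n r : ℕ) (T : PreTree ((n+1)+3) (2*(n+1)+4)) (T1 : PreTree (n+3) (2*n+4))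
      (T2 : PreTree (r+3) (2*r+4)) :
      DelLast n T T1 → Restricts n r T1 T2 → Restricts (n+1) r T T2

/-- The composition `k̃_j`: decrement `k j` and delete position `dpos`
(the rightmost zero of the result). -/
def tilde {n : ℕ} (k : Fin (n+1) → ℕ) (dpos : ℕ) (j : Fin (n+1)) : Fin n → ℕ :=
  fun m => if (m:ℕ) < dpos then Function.update k j (k j - 1) (Fin.castSucc m)
           else Function.update k j (k j - 1) (Fin.succ m)

/-- The map `π_lazy` relates `T` to the pair `(j, T')` where `j` is the winner of the
first round of the tournament, the two leaves that competed are deleted (the shared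
vertex becoming a new leaf) and the labels are shifted according to the (non)lazy case. -/
def PiLazyRel (n : ℕ) (k : Fin (n+1) → ℕ) (T : PreTree ((n+1)+3) (2*(n+1)+4))
    (j : Fin (n+1)) (T' : PreTree (n+3) (2*n+4)) : Prop :=
  ∃ (R : Run (n+1) T) (g : Fin (2*n+4) → Fin (2*(n+1)+4)),
    (∀ m : Fin (n+1), R.wins (lbl m) = k m) ∧
    R.winner ⟨0, Nat.succ_pos n⟩ = lbl j ∧
    Function.Injective g ∧
    (∀ v, v ∈ Set.range g ↔
      (v ≠ T.leaf (R.loser ⟨0, Nat.succ_pos n⟩) ∧ v ≠ T.leaf (R.winner ⟨0, Nat.succ_pos n⟩))) ∧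
    (∀ u u' : Fin (2*n+4), T'.G.Adj u u' ↔ T.G.Adj (g u) (g u')) ∧
    (if k j = 1 then
      ∀ β : Fin (n+3), g (T'.leaf β) =
        (if (β:ℕ) = ((R.loser ⟨0, Nat.succ_pos n⟩) : ℕ) then R.vtx ⟨0, Nat.succ_pos n⟩
         else if (β:ℕ) < ((R.winner ⟨0, Nat.succ_pos n⟩) : ℕ) then T.leaf (Fin.castSucc β)
         else T.leaf (Fin.succ β))
     else
      ∀ β : Fin (n+3), g (T'.leaf β) =
        (if (β:ℕ) < ((R.loser ⟨0, Nat.succ_pos n⟩) : ℕ) then T.leaf (Fin.castSucc β)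
         else if (β:ℕ)+1 = ((R.winner ⟨0, Nat.succ_pos n⟩) : ℕ) then R.vtx ⟨0, Nat.succ_pos n⟩
         else T.leaf (Fin.succ β)))

/-! ### Parking functions.
A parking function of size `n` is encoded by `col : Fin n → Fin n`, where `col x` is the
(0-indexed) column of the label `x+1`; the Dyck path condition (for paths from `(0,n)` to
`(n,0)` staying weakly above the diagonal, cells left of down steps) is `IsPF`. -/

def IsPF {n : ℕ} (col : Fin n → Fin n) : Prop :=
  ∀ j : Fin n, n - (j:ℕ) ≤ (Finset.univ.filter fun x => j ≤ col x).card

/-- Dominance index of label `x+1`: the number of columns strictly to its right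
containing no entry greater than `x+1` (empty columns count). -/
def domIdx {n : ℕ} (col : Fin n → Fin n) (x : Fin n) : ℕ :=
  (Finset.univ.filter fun j : Fin n => col x < j ∧ ∀ y, col y = j → y ≤ x).card

/-- Column-restricted: `x > d_x` for all labels `x` (label `x : Fin n` has value `x+1`). -/
def ColRes {n : ℕ} (col : Fin n → Fin n) : Prop := ∀ x : Fin n, domIdx col x < (x:ℕ) + 1

/-- Number of labels in column `j`. -/
def colCount {n : ℕ} (col : Fin n → Fin n) (j : Fin n) : ℕ :=
  (Finset.univ.filter fun x => col x = j).card

/-- `col'` is the image of `col` under the map `r`: remove the row containing the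
label `1`, decrement the remaining labels, and delete the rightmost empty column `E`. -/
def RSpec {n : ℕ} (col : Fin (n+1) → Fin (n+1)) (col' : Fin n → Fin n) : Prop :=
  ∃ E : Fin (n+1),
    (∀ y : Fin (n+1), y ≠ 0 → col y ≠ E) ∧
    (∀ j : Fin (n+1), (∀ y, y ≠ 0 → col y ≠ j) → j ≤ E) ∧
    (∀ x : Fin n, (col' x : ℕ) =
      if (col (Fin.succ x) : ℕ) < (E:ℕ) then (col (Fin.succ x) : ℕ)
      else (col (Fin.succ x) : ℕ) - 1)

/-- `col` is the parking function `τ(T)`: column `col m` contains label `m+1`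
iff the label `col m + 1` wins round `m+1` of the lazy tournament of `T`. -/
def TauRel {n : ℕ} (T : PreTree (n+3) (2*n+4)) (col : Fin n → Fin n) : Prop :=
  ∃ R : Run n T, ∀ t : Fin n, ((R.winner t) : ℕ) = (col t : ℕ) + 3
namespace Pt
open SimpleGraph
set_option linter.unusedSectionVars false

variable {n : ℕ}

section Tree
variable (T : PreTree (n+3) (2*n+4))

/-- root: leaf a -/
def rt : Fin (2*n+4) := T.leaf 0

/-- depth -/
noncomputable def dd (v : Fin (2*n+4)) : ℕ := T.G.dist v (rt T)

/-- parent map -/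
noncomputable def par (v : Fin (2*n+4)) : Fin (2*n+4) :=
  if h : ∃ u, T.G.Adj v u ∧ dd T u + 1 = dd T v then h.choose else v

variable (hT : T.IsTrivalent)
include hT

lemma conn : T.G.Connected := hT.1.isConnected

lemma dd_eq_zero {v} : dd T v = 0 ↔ v = rt T := by
  unfold dd
  constructor
  · intro h
    exact ((conn T hT).dist_eq_zero_iff).mp h
  · rintro rfl; exact dist_self

lemma dd_rt : dd T (rt T) = 0 := (dd_eq_zero T hT).mpr rfl

lemma exists_par {v} (hv : v ≠ rt T) : ∃ u, T.G.Adj v u ∧ dd T u + 1 = dd T v := by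
  have hr : T.G.Reachable v (rt T) := (conn T hT).preconnected v (rt T)
  have hd : dd T v ≠ 0 := fun h => hv ((dd_eq_zero T hT).mp h)
  obtain ⟨p, hp⟩ := hr.exists_walk_length_eq_dist
  cases p with
  | nil => simp [dd] at hd
  | @cons _ u _ hadj q =>
    refine ⟨u, hadj, ?_⟩
    have h1 : T.G.dist u (rt T) ≤ q.length := dist_le q
    have h2 : T.G.dist v (rt T) ≤ T.G.dist v u + T.G.dist u (rt T) :=
      (conn T hT).dist_triangle
    have h3 : T.G.dist v u ≤ 1 := by
      have := dist_le (Walk.cons hadj Walk.nil)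
      simpa using this
    simp only [Walk.length_cons] at hp
    unfold dd
    omega

lemma par_spec {v} (hv : v ≠ rt T) :
    T.G.Adj v (par T v) ∧ dd T (par T v) + 1 = dd T v := by
  have h := exists_par T hT hv
  rw [par, dif_pos h]
  exact h.choose_spec

lemma par_adj {v} (hv : v ≠ rt T) : T.G.Adj v (par T v) := (par_spec T hT hv).1

lemma dd_par {v} (hv : v ≠ rt T) : dd T (par T v) + 1 = dd T v := (par_spec T hT hv).2

lemma par_rt : par T (rt T) = rt T := by
  rw [par, dif_neg]
  rintro ⟨u, _, h⟩
  rw [dd_rt T hT] at h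
  omega

/-- canonical walk to the root -/
noncomputable def cw (v : Fin (2*n+4)) : T.G.Walk v (rt T) :=
  if h : v = rt T then (Walk.nil : T.G.Walk (rt T) (rt T)).copy h.symm rfl
  else Walk.cons (par_adj T hT h) (cw (par T v))
termination_by dd T v
decreasing_by
  have hne : ¬ v = rt T := by assumption
  have := dd_par T hT hne; omega

lemma cw_length (v : Fin (2*n+4)) : (cw T hT v).length = dd T v := by
  rw [cw]
  split
  · next h => subst h; simp [dd_rt T hT]
  · next h =>
    simp only [Walk.length_cons, cw_length (par T v)]
    have := dd_par T hT h; omega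
termination_by dd T v
decreasing_by
  have hne : ¬ v = rt T := by assumption
  have := dd_par T hT hne; omega

lemma cw_support_dd (v : Fin (2*n+4)) :
    ∀ u ∈ (cw T hT v).support, dd T u ≤ dd T v ∧ (dd T u = dd T v → u = v) := by
  rw [cw]
  split
  · next h => subst h; intro u hu; simp at hu; subst hu; exact ⟨le_refl _, fun _ => rfl⟩
  · next h =>
    intro u hu
    simp only [Walk.support_copy, Walk.support_cons, List.mem_cons] at hu
    rcases hu with rfl | hu
    · exact ⟨le_refl _, fun _ => rfl⟩
    · have ih := cw_support_dd (par T v) u hu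
      have := dd_par T hT h
      constructor
      · omega
      · intro hh; omega
termination_by dd T v
decreasing_by
  have hne : ¬ v = rt T := by assumption
  have := dd_par T hT hne; omega

lemma cw_isPath (v : Fin (2*n+4)) : (cw T hT v).IsPath := by
  rw [cw]
  split
  · next h => subst h; simp
  · next h =>
    rw [Walk.cons_isPath_iff]
    refine ⟨cw_isPath (par T v), fun hv => ?_⟩
    have := (cw_support_dd T hT (par T v) v hv).1
    have := dd_par T hT h
    omega
termination_by dd T v
decreasing_by
  have hne : ¬ v = rt T := by assumption
  have := dd_par T hT hne; omega

lemma cw_first_edge {v : Fin (2*n+4)} (hv : v ≠ rt T) :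
    s(v, par T v) ∈ (cw T hT v).edges := by
  rw [cw, dif_neg hv]
  simp

lemma path_eq_cw {v : Fin (2*n+4)} (p : T.G.Walk v (rt T)) (hp : p.IsPath) :
    p = cw T hT v := by
  have := hT.1.IsAcyclic.path_unique ⟨p, hp⟩ ⟨cw T hT v, cw_isPath T hT v⟩
  exact congrArg Subtype.val this

lemma dd_ne_of_adj {u v} (h : T.G.Adj u v) : dd T u ≠ dd T v := by
  intro heq
  have hne : u ≠ v := h.ne
  have hu : u ∉ (cw T hT v).support := by
    intro hm
    exact hne ((cw_support_dd T hT v u hm).2 heq)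
  have hq : (Walk.cons h (cw T hT v)).IsPath :=
    (Walk.cons_isPath_iff _ _).mpr ⟨cw_isPath T hT v, hu⟩
  have := congrArg Walk.length (path_eq_cw T hT _ hq)
  rw [Walk.length_cons, cw_length, cw_length] at this
  omega

lemma par_eq_of_adj_lt {u v} (h : T.G.Adj u v) (hlt : dd T v < dd T u) :
    par T u = v := by
  have hu : u ≠ rt T := by
    intro hu; rw [hu, dd_rt T hT] at hlt; omega
  have hmem : u ∉ (cw T hT v).support := by
    intro hm
    have := (cw_support_dd T hT v u hm).1
    omega
  have hq : (Walk.cons h (cw T hT v)).IsPath :=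
    (Walk.cons_isPath_iff _ _).mpr ⟨cw_isPath T hT v, hmem⟩
  have heq : Walk.cons h (cw T hT v) = cw T hT u := path_eq_cw T hT _ hq
  rw [show cw T hT u = Walk.cons (par_adj T hT hu) (cw T hT (par T u)) from by
    rw [cw, dif_neg hu]] at heq
  have hs := congrArg Walk.support heq
  rw [Walk.support_cons, Walk.support_cons, Walk.support_eq_cons (cw T hT v),
    Walk.support_eq_cons (cw T hT (par T u))] at hs
  have hv : v = par T u := by
    injection hs with _ h2
    injection h2 with h3 _
  exact hv.symm

lemma adj_par_or {u v} (h : T.G.Adj u v) : par T u = v ∨ par T v = u := by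
  have hne := dd_ne_of_adj T hT h
  rcases lt_or_gt_of_ne hne with hlt | hlt
  · right; exact par_eq_of_adj_lt T hT h.symm hlt
  · left; exact par_eq_of_adj_lt T hT h hlt

lemma dd_iter {v} : ∀ k, k ≤ dd T v → dd T ((par T)^[k] v) = dd T v - k := by
  intro k
  induction k with
  | zero => simp
  | succ m ih =>
    intro hm
    rw [Function.iterate_succ_apply']
    have h1 : dd T ((par T)^[m] v) = dd T v - m := ih (by omega)
    have hne : (par T)^[m] v ≠ rt T := by
      intro hh
      rw [hh, dd_rt T hT] at h1
      omega
    have := dd_par T hT hne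
    omega

lemma iter_ne_rt {v k} (hk : k < dd T v) : (par T)^[k] v ≠ rt T := by
  intro hh
  have := dd_iter T hT (v := v) k (by omega)
  rw [hh, dd_rt T hT] at this
  omega

lemma iter_adj {v k} (hk : k < dd T v) :
    T.G.Adj ((par T)^[k] v) ((par T)^[k+1] v) := by
  rw [Function.iterate_succ_apply']
  exact par_adj T hT (iter_ne_rt T hT hk)

lemma iter_inj {v k m} (hk : k ≤ dd T v) (hm : m ≤ dd T v)
    (h : (par T)^[k] v = (par T)^[m] v) : k = m := by
  have h1 := dd_iter T hT (v := v) k hk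
  have h2 := dd_iter T hT (v := v) m hm
  rw [h] at h1
  omega

lemma iter_rt (v) : (par T)^[dd T v] v = rt T := by
  have := dd_iter T hT (v := v) (dd T v) (le_refl _)
  simp at this
  exact (dd_eq_zero T hT).mp this

end Tree
end Pt
namespace Pt
open SimpleGraph
set_option linter.unusedSectionVars false
variable {n : ℕ}

section Deg
variable (T : PreTree (n+3) (2*n+4))

lemma edge_other {e : Sym2 (Fin (2*n+4))} {v} (he : e ∈ T.G.edgeSet) (hv : v ∈ e) :
    ∃ x, T.G.Adj v x ∧ e = s(v, x) := by
  induction e using Sym2.ind with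
  | _ a b =>
    rw [Sym2.mem_iff] at hv
    rw [mem_edgeSet] at he
    rcases hv with rfl | rfl
    · exact ⟨b, he, rfl⟩
    · exact ⟨a, he.symm, Sym2.eq_swap⟩

lemma unique_nbr {v x y} (h1 : T.G.degree v = 1) (hx : T.G.Adj v x) (hy : T.G.Adj v y) :
    x = y := by
  have hc : (T.G.neighborFinset v).card ≤ 1 := by
    rw [card_neighborFinset_eq_degree, h1]
  exact Finset.card_le_one.mp hc x (by rwa [mem_neighborFinset]) y (by rwa [mem_neighborFinset])

variable (hT : T.IsTrivalent)
include hT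

lemma deg_eq_three_of {v} {e1 e2 e3 : Sym2 (Fin (2*n+4))}
    (h1 : e1 ∈ T.G.edgeSet) (h2 : e2 ∈ T.G.edgeSet) (h3 : e3 ∈ T.G.edgeSet)
    (hv1 : v ∈ e1) (hv2 : v ∈ e2) (hv3 : v ∈ e3)
    (h12 : e1 ≠ e2) (h13 : e1 ≠ e3) (h23 : e2 ≠ e3) : T.G.degree v = 3 := by
  obtain ⟨x1, hx1, he1⟩ := edge_other T h1 hv1
  obtain ⟨x2, hx2, he2⟩ := edge_other T h2 hv2
  obtain ⟨x3, hx3, he3⟩ := edge_other T h3 hv3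
  have d12 : x1 ≠ x2 := fun h => h12 (by rw [he1, he2, h])
  have d13 : x1 ≠ x3 := fun h => h13 (by rw [he1, he3, h])
  have d23 : x2 ≠ x3 := fun h => h23 (by rw [he2, he3, h])
  have hsub : ({x1, x2, x3} : Finset (Fin (2*n+4))) ⊆ T.G.neighborFinset v := by
    intro x hx
    simp only [Finset.mem_insert, Finset.mem_singleton] at hx
    rcases hx with rfl | rfl | rfl <;> rwa [mem_neighborFinset]
  have hcard : ({x1, x2, x3} : Finset (Fin (2*n+4))).card = 3 := by
    rw [Finset.card_insert_of_notMem (by simp [d12, d13]),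
      Finset.card_insert_of_notMem (by simp [d23]), Finset.card_singleton]
  have hge : 3 ≤ T.G.degree v := by
    rw [← card_neighborFinset_eq_degree]
    calc 3 = ({x1, x2, x3} : Finset (Fin (2*n+4))).card := hcard.symm
    _ ≤ _ := Finset.card_le_card hsub
  rcases hT.2.1 v with h | h
  · omega
  · exact h

lemma edge_mem_three {v} {e1 e2 e3 e4 : Sym2 (Fin (2*n+4))}
    (h1 : e1 ∈ T.G.edgeSet) (h2 : e2 ∈ T.G.edgeSet) (h3 : e3 ∈ T.G.edgeSet)
    (h4 : e4 ∈ T.G.edgeSet)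
    (hv1 : v ∈ e1) (hv2 : v ∈ e2) (hv3 : v ∈ e3) (hv4 : v ∈ e4)
    (h12 : e1 ≠ e2) (h13 : e1 ≠ e3) (h23 : e2 ≠ e3) :
    e4 = e1 ∨ e4 = e2 ∨ e4 = e3 := by
  by_contra hne
  push_neg at hne
  obtain ⟨hn1, hn2, hn3⟩ := hne
  obtain ⟨x1, hx1, he1⟩ := edge_other T h1 hv1
  obtain ⟨x2, hx2, he2⟩ := edge_other T h2 hv2
  obtain ⟨x3, hx3, he3⟩ := edge_other T h3 hv3
  obtain ⟨x4, hx4, he4⟩ := edge_other T h4 hv4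
  have d12 : x1 ≠ x2 := fun h => h12 (by rw [he1, he2, h])
  have d13 : x1 ≠ x3 := fun h => h13 (by rw [he1, he3, h])
  have d23 : x2 ≠ x3 := fun h => h23 (by rw [he2, he3, h])
  have d41 : x4 ≠ x1 := fun h => hn1 (by rw [he4, he1, h])
  have d42 : x4 ≠ x2 := fun h => hn2 (by rw [he4, he2, h])
  have d43 : x4 ≠ x3 := fun h => hn3 (by rw [he4, he3, h])
  have hsub : ({x4, x1, x2, x3} : Finset (Fin (2*n+4))) ⊆ T.G.neighborFinset v := by
    intro x hx
    simp only [Finset.mem_insert, Finset.mem_singleton] at hx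
    rcases hx with rfl | rfl | rfl | rfl <;> rwa [mem_neighborFinset]
  have hcard : ({x4, x1, x2, x3} : Finset (Fin (2*n+4))).card = 4 := by
    rw [Finset.card_insert_of_notMem (by simp [d41, d42, d43]),
      Finset.card_insert_of_notMem (by simp [d12, d13]),
      Finset.card_insert_of_notMem (by simp [d23]), Finset.card_singleton]
  have hdeg := deg_eq_three_of T hT h1 h2 h3 hv1 hv2 hv3 h12 h13 h23
  have hge : 4 ≤ T.G.degree v := by
    rw [← card_neighborFinset_eq_degree]
    calc 4 = ({x4, x1, x2, x3} : Finset (Fin (2*n+4))).card := hcard.symm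
    _ ≤ _ := Finset.card_le_card hsub
  omega

lemma deg_leaf (i : Fin (n+3)) : T.G.degree (T.leaf i) = 1 := hT.2.2.2.1 i

lemma leaf_inj {i j : Fin (n+3)} (h : T.leaf i = T.leaf j) : i = j := hT.2.2.1 h

lemma leaf_ne_rt {i : Fin (n+3)} (hi : i ≠ 0) : T.leaf i ≠ rt T :=
  fun h => hi (leaf_inj T hT h)

lemma dd_leaf_pos {i : Fin (n+3)} (hi : i ≠ 0) : 1 ≤ dd T (T.leaf i) := by
  have := (conn T hT).pos_dist_of_ne (leaf_ne_rt T hT hi)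
  unfold dd; omega

variable (hab : T.ABAdj)

/-- the common neighbor of leaves a and b -/
noncomputable def wv : Fin (2*n+4) := hab.choose

lemma w_adj0 : T.G.Adj (rt T) (wv T hab) := hab.choose_spec.1
lemma w_adj1 : T.G.Adj (T.leaf 1) (wv T hab) := hab.choose_spec.2

include hab

lemma w_ne_rt : wv T hab ≠ rt T := fun h => T.G.loopless.irrefl _ (h ▸ w_adj0 T hT hab)

lemma adj_rt_eq_w {x} (h : T.G.Adj (rt T) x) : x = wv T hab :=
  unique_nbr T (deg_leaf T hT 0) h (w_adj0 T hT hab)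

lemma deg_w : T.G.degree (wv T hab) = 3 := by
  rcases hT.2.1 (wv T hab) with h | h
  · exfalso
    have h01 : (T.leaf 0) = T.leaf 1 :=
      unique_nbr T h (w_adj0 T hT hab).symm (w_adj1 T hT hab).symm
    have := leaf_inj T hT h01
    simp at this
  · exact h

lemma w_not_leaf (i : Fin (n+3)) : wv T hab ≠ T.leaf i := by
  intro h
  have := deg_w T hT hab
  rw [h, deg_leaf T hT] at this
  omega

lemma par_w : par T (wv T hab) = rt T := by
  rcases adj_par_or T hT (w_adj0 T hT hab).symm with h | h
  · exact h
  · exfalso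
    exact w_ne_rt T hT hab (by rw [← h, par_rt T hT])

lemma dd_w : dd T (wv T hab) = 1 := by
  have h := dd_par T hT (w_ne_rt T hT hab)
  rw [par_w T hT hab, dd_rt T hT] at h
  omega

lemma par_leaf1 : par T (T.leaf 1) = wv T hab := by
  rcases adj_par_or T hT (w_adj1 T hT hab) with h | h
  · exact h
  · exfalso
    rw [par_w T hT hab] at h
    exact leaf_ne_rt T hT (by simp) h.symm

lemma leaves_not_adj (i j : Fin (n+3)) : ¬ T.G.Adj (T.leaf i) (T.leaf j) := by
  intro h
  have hij : T.leaf i ≠ T.leaf j := h.ne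
  -- wlog dd (leaf j) < dd (leaf i)
  have main : ∀ i j : Fin (n+3), T.G.Adj (T.leaf i) (T.leaf j) →
      dd T (T.leaf j) < dd T (T.leaf i) → False := by
    intro i j h hlt
    have hirt : T.leaf i ≠ rt T := by
      intro hh
      rw [hh, dd_rt T hT] at hlt
      omega
    have hpar : par T (T.leaf i) = T.leaf j := par_eq_of_adj_lt T hT h hlt
    by_cases hjrt : T.leaf j = rt T
    · -- leaf i adjacent to root, so leaf i = w : contradiction with w not leaf
      have : T.leaf i = wv T hab := adj_rt_eq_w T hT hab (hjrt ▸ h.symm)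
      exact w_not_leaf T hT hab i this.symm
    · have hadjp : T.G.Adj (T.leaf j) (par T (T.leaf j)) := par_adj T hT hjrt
      have : par T (T.leaf j) = T.leaf i := by
        have hj1 : T.G.degree (T.leaf j) = 1 := deg_leaf T hT j
        exact unique_nbr T hj1 hadjp h.symm
      have hd1 := dd_par T hT hjrt
      rw [this] at hd1
      omega
  rcases lt_or_gt_of_ne (dd_ne_of_adj T hT h) with hlt | hlt
  · exact main j i h.symm hlt
  · exact main i j h hlt

lemma par_leaf_adj {i : Fin (n+3)} (hi : i ≠ 0) : T.G.Adj (T.leaf i) (par T (T.leaf i)) :=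
  par_adj T hT (leaf_ne_rt T hT hi)

lemma adj_leaf_eq_par {i : Fin (n+3)} {x} (hi : i ≠ 0) (h : T.G.Adj (T.leaf i) x) :
    x = par T (T.leaf i) :=
  unique_nbr T (deg_leaf T hT i) h (par_leaf_adj T hT hab hi)

end Deg
end Pt
namespace Pt
open SimpleGraph
set_option linter.unusedSectionVars false
set_option maxHeartbeats 1000000

lemma sym2_cases {α : Type*} (e : Sym2 α) : ∃ a b, e = s(a, b) := by
  induction e using Sym2.ind with | _ a b => exact ⟨a, b, rfl⟩

variable {n : ℕ}

section Run
variable (T : PreTree (n+3) (2*n+4)) (hT : T.IsTrivalent) (hab : T.ABAdj) (R : Run n T)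

noncomputable def aE : Sym2 (Fin (2*n+4)) := s(rt T, wv T hab)
noncomputable def bE : Sym2 (Fin (2*n+4)) := s(T.leaf 1, wv T hab)

/-- The master invariant of the lazy tournament. -/
def GoodInv (t : ℕ) : Prop :=
  (∀ e, R.lab t e = some 0 ↔ e = aE T hab) ∧
  (∀ e, R.lab t e = some 1 ↔ e = bE T hab) ∧
  ∀ i : Fin (n+3), 2 ≤ (i : ℕ) → ∃ K, 1 ≤ K ∧ K ≤ dd T (T.leaf i) ∧
    ∀ e, R.lab t e = some i ↔
      ∃ k, k < K ∧ e = s((par T)^[k] (T.leaf i), (par T)^[k+1] (T.leaf i))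

lemma val_ge_two {i : Fin (n+3)} (h0 : i ≠ 0) (h1 : i ≠ 1) : 2 ≤ (i : ℕ) := by
  have v0 : (0 : Fin (n+3)).val = 0 := rfl
  have v1 : (1 : Fin (n+3)).val = 1 := rfl
  have : i.val ≠ 0 := fun h => h0 (Fin.ext (by omega))
  have : i.val ≠ 1 := fun h => h1 (Fin.ext (by omega))
  omega

lemma ne_zero_of_ge_two {i : Fin (n+3)} (h : 2 ≤ (i : ℕ)) : i ≠ 0 := by
  intro hh; subst hh; simp at h

lemma ne_one_of_ge_two {i : Fin (n+3)} (h : 2 ≤ (i : ℕ)) : i ≠ 1 := by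
  intro hh; subst hh
  have : (1 : Fin (n+3)).val = 1 := rfl
  omega

include hT hab

lemma lab_mono {t t' : ℕ} {e i} (h : t ≤ t') (h2 : t' ≤ n) (hl : R.lab t e = some i) :
    R.lab t' e = some i := by
  induction t' with
  | zero =>
    have ht0 : t = 0 := by omega
    subst ht0; exact hl
  | succ m ih =>
    rcases Nat.eq_or_lt_of_le h with rfl | hlt
    · exact hl
    · have hm : R.lab m e = some i := ih (by omega) (by omega)
      have hmn : m < n := by omega
      by_cases he : e = R.newE ⟨m, hmn⟩
      · exfalso
        rw [he, R.newE_unlabeled ⟨m, hmn⟩] at hm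
        exact nomatch hm
      · rw [R.step_frame ⟨m, hmn⟩ e he]
        exact hm

lemma lab_nonedge {t : ℕ} (h : t ≤ n) {e} (he : e ∉ T.G.edgeSet) : R.lab t e = none := by
  induction t with
  | zero => exact R.init_nonedge e he
  | succ m ih =>
    have hmn : m < n := by omega
    by_cases hee : e = R.newE ⟨m, hmn⟩
    · exact absurd (hee ▸ R.newE_mem ⟨m, hmn⟩) he
    · rw [R.step_frame ⟨m, hmn⟩ e hee]
      exact ih (by omega)

lemma lab_zero_iff {e i} : R.lab 0 e = some i ↔ (e ∈ T.G.edgeSet ∧ T.leaf i ∈ e) := by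
  constructor
  · intro h
    by_cases he : e ∈ T.G.edgeSet
    · refine ⟨he, ?_⟩
      by_cases hl : ∀ j : Fin (n+3), T.leaf j ∉ e
      · rw [R.init_other e hl] at h; exact nomatch h
      · push_neg at hl
        obtain ⟨j, hj⟩ := hl
        obtain ⟨x, hx, hex⟩ := edge_other T he hj
        rw [hex] at h
        rw [R.init_leaf j x hx] at h
        have : j = i := by injection h
        rwa [← this]
    · rw [lab_nonedge T hT hab R (Nat.zero_le n) he] at h; exact nomatch h
  · rintro ⟨he, hi⟩
    obtain ⟨x, hx, hex⟩ := edge_other T he hi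
    rw [hex]
    exact R.init_leaf i x hx

lemma good_zero : GoodInv T hab R 0 := by
  refine ⟨fun e => ?_, fun e => ?_, fun i h => ?_⟩
  · rw [lab_zero_iff T hT hab R]
    constructor
    · rintro ⟨he, hm⟩
      obtain ⟨x, hx, hex⟩ := edge_other T he hm
      have : x = wv T hab := adj_rt_eq_w T hT hab hx
      rw [hex, this]; rfl
    · rintro rfl
      exact ⟨(T.G.mem_edgeSet).mpr (w_adj0 T hT hab), Sym2.mem_mk_left _ _⟩
  · rw [lab_zero_iff T hT hab R]
    constructor
    · rintro ⟨he, hm⟩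
      obtain ⟨x, hx, hex⟩ := edge_other T he hm
      have h1 : (1 : Fin (n+3)) ≠ 0 := by
        intro hh
        have : (1 : Fin (n+3)).val = 1 := rfl
        have : (0 : Fin (n+3)).val = 0 := rfl
        rw [hh] at *; omega
      have : x = par T (T.leaf 1) := adj_leaf_eq_par T hT hab h1 hx
      rw [hex, this, par_leaf1 T hT hab]; rfl
    · rintro rfl
      exact ⟨(T.G.mem_edgeSet).mpr (w_adj1 T hT hab), Sym2.mem_mk_left _ _⟩
  · have hi0 : i ≠ 0 := ne_zero_of_ge_two h
    refine ⟨1, le_refl 1, dd_leaf_pos T hT hi0, fun e => ?_⟩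
    rw [lab_zero_iff T hT hab R]
    constructor
    · rintro ⟨he, hm⟩
      obtain ⟨x, hx, hex⟩ := edge_other T he hm
      have hxp : x = par T (T.leaf i) := adj_leaf_eq_par T hT hab hi0 hx
      exact ⟨0, by omega, by simp [hex, hxp]⟩
    · rintro ⟨k, hk, rfl⟩
      have hk0 : k = 0 := by omega
      subst hk0
      simp only [Function.iterate_zero, id_eq, Function.iterate_one]
      exact ⟨(T.G.mem_edgeSet).mpr (par_leaf_adj T hT hab hi0), Sym2.mem_mk_left _ _⟩

end Run
end Pt
namespace Pt
open SimpleGraph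
set_option linter.unusedSectionVars false
set_option maxHeartbeats 1000000

variable {n : ℕ}

section Run2
variable (T : PreTree (n+3) (2*n+4)) (hT : T.IsTrivalent) (hab : T.ABAdj) (R : Run n T)
include hT hab

lemma dd_lt (v : Fin (2*n+4)) : dd T v < 2*n+4 := by
  have h1 := cw_length T hT v
  have h2 := (cw_isPath T hT v).length_lt
  rw [h1] at h2
  simpa using h2

lemma descend (t : Fin n) (hG : GoodInv T hab R t.1) :
    ∀ (m : ℕ) (v : Fin (2*n+4)), 2*n+4 ≤ dd T v + m → v ≠ rt T →
      R.lab t.1 s(v, par T v) = none → 2 ≤ (R.loser t : ℕ) := by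
  intro m
  induction m with
  | zero =>
    intro v hm hv _
    have := dd_lt T hT hab v
    omega
  | succ m ih =>
    intro v hm hv hnone
    have hvadj : T.G.Adj v (par T v) := par_adj T hT hv
    have hpe_mem : s(v, par T v) ∈ T.G.edgeSet := (T.G.mem_edgeSet).mpr hvadj
    have hdeg3 : T.G.degree v = 3 := by
      rcases hT.2.1 v with h1 | h3
      · exfalso
        obtain ⟨i, hi⟩ := hT.2.2.2.2 v h1
        have hlab0 : R.lab 0 s(v, par T v) = some i := by
          rw [← hi] at hvadj ⊢
          exact R.init_leaf i _ hvadj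
        have := lab_mono T hT hab R (Nat.zero_le _) (le_of_lt t.2) hlab0
        rw [hnone] at this
        exact nomatch this
      · exact h3
    have hparmem : par T v ∈ T.G.neighborFinset v := by rwa [mem_neighborFinset]
    have hcard : ((T.G.neighborFinset v).erase (par T v)).card = 2 := by
      rw [Finset.card_erase_of_mem hparmem, card_neighborFinset_eq_degree, hdeg3]
    obtain ⟨c1, hc1, c2, hc2, hc12⟩ := Finset.one_lt_card.mp
      (by omega : 1 < ((T.G.neighborFinset v).erase (par T v)).card)
    have hprop : ∀ c ∈ (T.G.neighborFinset v).erase (par T v),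
        T.G.Adj c v ∧ par T c = v ∧ c ≠ rt T ∧ c ≠ v ∧ c ≠ par T v := by
      intro c hc
      rw [Finset.mem_erase, mem_neighborFinset] at hc
      obtain ⟨hne, hadj⟩ := hc
      have hadj' : T.G.Adj c v := hadj.symm
      have hpc : par T c = v := by
        rcases adj_par_or T hT hadj' with h | h
        · exact h
        · exact absurd h.symm hne
      refine ⟨hadj', hpc, ?_, hadj'.ne, hne⟩
      intro hc0
      rw [hc0, par_rt T hT] at hpc
      exact hv hpc.symm
    obtain ⟨hadj1, hpc1, hrt1, hcv1, hcp1⟩ := hprop c1 hc1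
    obtain ⟨hadj2, hpc2, hrt2, hcv2, hcp2⟩ := hprop c2 hc2
    have hmem1 : s(c1, v) ∈ T.G.edgeSet := (T.G.mem_edgeSet).mpr hadj1
    have hmem2 : s(c2, v) ∈ T.G.edgeSet := (T.G.mem_edgeSet).mpr hadj2
    have hdd1 : dd T c1 = dd T v + 1 := by
      have h := dd_par T hT hrt1; rw [hpc1] at h; omega
    have hdd2 : dd T c2 = dd T v + 1 := by
      have h := dd_par T hT hrt2; rw [hpc2] at h; omega
    by_cases hl1 : R.lab t.1 s(c1, v) = none
    · exact ih c1 (by omega) hrt1 (by rw [hpc1]; exact hl1)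
    by_cases hl2 : R.lab t.1 s(c2, v) = none
    · exact ih c2 (by omega) hrt2 (by rw [hpc2]; exact hl2)
    obtain ⟨i, hi⟩ := Option.ne_none_iff_exists'.mp hl1
    obtain ⟨j, hj⟩ := Option.ne_none_iff_exists'.mp hl2
    -- labels are ≥ 2
    have hlabel : ∀ c, c ≠ rt T → c ≠ v → ∀ i' : Fin (n+3),
        R.lab t.1 s(c, v) = some i' → 2 ≤ (i' : ℕ) := by
      intro c hcrt hcv i' hli'
      have hi0 : i' ≠ 0 := by
        intro h0
        subst h0
        have hae := (hG.1 _).mp hli'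
        rw [aE] at hae
        rcases Sym2.eq_iff.mp hae with ⟨h1, _⟩ | ⟨_, h2⟩
        · exact hcrt h1
        · exact hv h2
      have hi1 : i' ≠ 1 := by
        intro h1
        subst h1
        have hbe := (hG.2.1 _).mp hli'
        rw [bE] at hbe
        rcases Sym2.eq_iff.mp hbe with ⟨h1', h2'⟩ | ⟨h1', h2'⟩
        · -- c = leaf 1, v = w : then parent edge of v is aE, labeled
          have haE : R.lab t.1 (aE T hab) = some 0 := (hG.1 _).mpr rfl
          have heq : s(v, par T v) = aE T hab := by
            rw [h2', par_w T hT hab, aE]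
            exact Sym2.eq_swap
          rw [heq, haE] at hnone
          exact nomatch hnone
        · -- v = leaf 1 : degree contradiction
          exfalso
          have := deg_leaf T hT 1
          rw [← h2'] at this
          omega
      exact val_ge_two hi0 hi1
    have hi2 : 2 ≤ (i : ℕ) := hlabel c1 hrt1 hcv1 i hi
    have hj2 : 2 ≤ (j : ℕ) := hlabel c2 hrt2 hcv2 j hj
    -- the two labels are distinct
    have hij : i ≠ j := by
      intro heq
      subst heq
      obtain ⟨K, hK1, hKd, hiff⟩ := hG.2.2 i hi2
      obtain ⟨k1, hk1, hek1⟩ := (hiff _).mp hi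
      obtain ⟨k2, hk2, hek2⟩ := (hiff _).mp hj
      have hveq : ∀ c k', c ≠ par T v → s(c, v) = s((par T)^[k'] (T.leaf i), (par T)^[k'+1] (T.leaf i)) →
          v = (par T)^[k'+1] (T.leaf i) := by
        intro c k' hcp hek
        rcases Sym2.eq_iff.mp hek with ⟨h1, h2⟩ | ⟨h1, h2⟩
        · exact h2
        · exfalso
          apply hcp
          rw [h2, h1, ← Function.iterate_succ_apply' (par T)]
      have hv1 := hveq c1 k1 hcp1 hek1
      have hv2 := hveq c2 k2 hcp2 hek2
      have : k1 + 1 = k2 + 1 := by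
        apply iter_inj T hT (v := T.leaf i) (by omega) (by omega)
        rw [← hv1, ← hv2]
      have hk12 : k1 = k2 := by omega
      subst hk12
      rw [← hek2] at hek1
      rcases Sym2.eq_iff.mp hek1 with ⟨h1, _⟩ | ⟨h1, h2⟩
      · exact hc12 h1
      · exact hcv1 h1
    -- distinctness of edges
    have hd12 : s(c1, v) ≠ s(c2, v) := by
      intro h
      rcases Sym2.eq_iff.mp h with ⟨h1, _⟩ | ⟨h1, _⟩
      · exact hc12 h1
      · exact hcv1 h1
    have hd1p : s(c1, v) ≠ s(v, par T v) := by
      intro h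
      rcases Sym2.eq_iff.mp h with ⟨h1, _⟩ | ⟨h1, _⟩
      · exact hcv1 h1
      · exact hcp1 h1
    have hd2p : s(c2, v) ≠ s(v, par T v) := by
      intro h
      rcases Sym2.eq_iff.mp h with ⟨h1, _⟩ | ⟨h1, _⟩
      · exact hcv2 h1
      · exact hcp2 h1
    rcases lt_trichotomy i j with hlt | heq | hgt
    · have := R.max_rule t s(c1, v) s(c2, v) s(v, par T v) i j v hmem1 hmem2 hpe_mem
        hi hj hnone hlt (Sym2.mem_mk_right _ _) (Sym2.mem_mk_right _ _)
        (Sym2.mem_mk_left _ _) hd12 hd1p hd2p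
      rw [Fin.le_def] at this
      omega
    · exact absurd heq hij
    · have := R.max_rule t s(c2, v) s(c1, v) s(v, par T v) j i v hmem2 hmem1 hpe_mem
        hj hi hnone hgt (Sym2.mem_mk_right _ _) (Sym2.mem_mk_right _ _)
        (Sym2.mem_mk_left _ _) hd12.symm hd2p hd1p
      rw [Fin.le_def] at this
      omega

lemma find (t : Fin n) (hG : GoodInv T hab R t.1) : 2 ≤ (R.loser t : ℕ) := by
  obtain ⟨a, b, hE⟩ := sym2_cases (R.newE t)
  have hadj : T.G.Adj a b := (T.G.mem_edgeSet).mp (hE ▸ R.newE_mem t)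
  have hunl := R.newE_unlabeled t
  rcases adj_par_or T hT hadj with hpa | hpb
  · have hart : a ≠ rt T := by
      intro h
      rw [h, par_rt T hT] at hpa
      exact hadj.ne (by rw [h, ← hpa])
    exact descend T hT hab R t hG (2*n+4) a (by omega) hart
      (by rw [hpa, ← hE]; exact hunl)
  · have hbrt : b ≠ rt T := by
      intro h
      rw [h, par_rt T hT] at hpb
      exact hadj.ne (by rw [h, ← hpb])
    refine descend T hT hab R t hG (2*n+4) b (by omega) hbrt ?_
    rw [hpb]
    rw [show s(b, a) = s(a, b) from Sym2.eq_swap, ← hE]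
    exact hunl

end Run2
end Pt
namespace Pt
open SimpleGraph
set_option linter.unusedSectionVars false
set_option maxHeartbeats 1000000

variable {n : ℕ}

section Run3
variable (T : PreTree (n+3) (2*n+4)) (hT : T.IsTrivalent) (hab : T.ABAdj) (R : Run n T)
include hT hab

lemma not_parent_labeled (t : Fin n) (hG : GoodInv T hab R t.1)
    (hdeg : T.G.degree (R.vtx t) = 3) (hvrt : R.vtx t ≠ rt T)
    {E oE : Sym2 (Fin (2*n+4))} {i j : Fin (n+3)}
    (hoEmem : oE ∈ T.G.edgeSet)
    (hlabE : R.lab t.1 E = some i) (hlaboE : R.lab t.1 oE = some j)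
    (hij : i ≠ j) (hi2 : 2 ≤ (i : ℕ))
    (hclose : ∀ e4, e4 ∈ T.G.edgeSet → R.vtx t ∈ e4 → e4 = E ∨ e4 = oE ∨ e4 = R.newE t)
    (hpE : s(R.vtx t, par T (R.vtx t)) = E) : False := by
  set v := R.vtx t with hvdef
  obtain ⟨K, hK1, hKd, hiff⟩ := hG.2.2 i hi2
  obtain ⟨k, hk, hek⟩ := (hiff E).mp hlabE
  rw [← hpE] at hek
  set ℓ := T.leaf i with hldef
  rcases Sym2.eq_iff.mp hek with ⟨h1, h2⟩ | ⟨h1, h2⟩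
  · -- v = par^[k] ℓ, par v = par^[k+1] ℓ
    rcases Nat.eq_zero_or_pos k with hk0 | hkpos
    · subst hk0
      simp only [Function.iterate_zero, id_eq] at h1
      have := deg_leaf T hT i
      rw [← hldef, ← h1] at this
      omega
    obtain ⟨k', rfl⟩ : ∃ k', k = k' + 1 := ⟨k - 1, by omega⟩
    have hglab : R.lab t.1 s((par T)^[k'] ℓ, (par T)^[k'+1] ℓ) = some i :=
      (hiff _).mpr ⟨k', by omega, rfl⟩
    have hgadj : T.G.Adj ((par T)^[k'] ℓ) ((par T)^[k'+1] ℓ) :=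
      iter_adj T hT (by omega)
    have hgmem : s((par T)^[k'] ℓ, (par T)^[k'+1] ℓ) ∈ T.G.edgeSet :=
      (T.G.mem_edgeSet).mpr hgadj
    have hvg : v ∈ s((par T)^[k'] ℓ, (par T)^[k'+1] ℓ) := by
      rw [h1]
      exact Sym2.mem_mk_right _ _
    have hgne : s((par T)^[k'] ℓ, (par T)^[k'+1] ℓ) ≠ E := by
      rw [← hpE]
      intro hq
      rcases Sym2.eq_iff.mp hq with ⟨q1, q2⟩ | ⟨q1, q2⟩
      · -- par^[k'] ℓ = v = par^[k'+1] ℓ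
        rw [h1] at q1
        have : k' = k' + 1 := iter_inj T hT (by omega) (by omega) q1
        omega
      · -- par^[k'] ℓ = par v = par^[k'+2] ℓ
        rw [h2] at q1
        have heq2 : (par T)^[k'] ℓ = (par T)^[k'+2] ℓ := by
          rw [q1]
        have : k' = k' + 2 := iter_inj T hT (by omega) (by omega) heq2
        omega
    rcases hclose _ hgmem hvg with hq | hq | hq
    · exact hgne hq
    · rw [hq, hlaboE] at hglab
      exact hij (Option.some.inj hglab).symm
    · rw [hq, R.newE_unlabeled t] at hglab
      exact nomatch hglab
  · -- v = par^[k+1] ℓ, par v = par^[k] ℓ : impossible by depth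
    have hkrt : (par T)^[k] ℓ ≠ rt T := iter_ne_rt T hT (by omega)
    have hd1 : dd T ((par T)^[k] ℓ) = dd T ℓ - k := dd_iter T hT k (by omega)
    have hd2 : dd T ((par T)^[k+1] ℓ) = dd T ℓ - (k+1) := dd_iter T hT (k+1) (by omega)
    have hdp := dd_par T hT hvrt
    rw [← h2] at hd1
    rw [← h1] at hd2
    omega

lemma advance (t : Fin n) (hG : GoodInv T hab R t.1) (hl2 : 2 ≤ (R.loser t : ℕ)) :
    R.vtx t ≠ rt T ∧ T.G.degree (R.vtx t) = 3 ∧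
      R.newE t = s(R.vtx t, par T (R.vtx t)) := by
  obtain ⟨hvL, hvW, hvN⟩ := R.vtx_mem t
  obtain ⟨hLW, hLN, hWN⟩ := R.edges_distinct t
  have hdeg : T.G.degree (R.vtx t) = 3 :=
    deg_eq_three_of T hT (R.loserE_mem t) (R.winnerE_mem t) (R.newE_mem t)
      hvL hvW hvN hLW hLN hWN
  have hvrt : R.vtx t ≠ rt T := by
    intro h
    have h1 : T.G.degree (rt T) = 1 := deg_leaf T hT 0
    rw [h] at hdeg
    rw [hdeg] at h1
    exact absurd h1 (by omega)
  have hadjp : T.G.Adj (R.vtx t) (par T (R.vtx t)) := par_adj T hT hvrt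
  have hpmem : s(R.vtx t, par T (R.vtx t)) ∈ T.G.edgeSet := (T.G.mem_edgeSet).mpr hadjp
  have hpv : R.vtx t ∈ s(R.vtx t, par T (R.vtx t)) := Sym2.mem_mk_left _ _
  have hw2 : 2 ≤ (R.winner t : ℕ) := by
    have := R.lt_lw t
    rw [Fin.lt_def] at this
    omega
  have hlw_ne : R.loser t ≠ R.winner t := Fin.ne_of_lt (R.lt_lw t)
  rcases edge_mem_three T hT (R.loserE_mem t) (R.winnerE_mem t) (R.newE_mem t) hpmem
      hvL hvW hvN hpv hLW hLN hWN with hq | hq | hq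
  · exfalso
    refine not_parent_labeled T hT hab R t hG hdeg hvrt (R.winnerE_mem t)
      (hq ▸ R.lab_loserE t) (R.lab_winnerE t) hlw_ne hl2 ?_ hq
    intro e4 he4 hv4
    exact edge_mem_three T hT (R.loserE_mem t) (R.winnerE_mem t) (R.newE_mem t) he4
      hvL hvW hvN hv4 hLW hLN hWN
  · exfalso
    refine not_parent_labeled T hT hab R t hG hdeg hvrt (R.loserE_mem t)
      (hq ▸ R.lab_winnerE t) (R.lab_loserE t) (Ne.symm hlw_ne) hw2 ?_ hq
    intro e4 he4 hv4
    rcases edge_mem_three T hT (R.loserE_mem t) (R.winnerE_mem t) (R.newE_mem t) he4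
      hvL hvW hvN hv4 hLW hLN hWN with h | h | h
    · exact Or.inr (Or.inl h)
    · exact Or.inl h
    · exact Or.inr (Or.inr h)
  · exact ⟨hvrt, hdeg, hq.symm⟩

lemma top_edge (t : Fin n) (hG : GoodInv T hab R t.1)
    (hadv : R.newE t = s(R.vtx t, par T (R.vtx t)))
    {f : Sym2 (Fin (2*n+4))} {L : Fin (n+3)} {K : ℕ}
    (hK1 : 1 ≤ K) (hKd : K ≤ dd T (T.leaf L))
    (hiff : ∀ e, R.lab t.1 e = some L ↔
      ∃ k, k < K ∧ e = s((par T)^[k] (T.leaf L), (par T)^[k+1] (T.leaf L)))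
    (hvf : R.vtx t ∈ f) (hfne : f ≠ R.newE t) (hlab : R.lab t.1 f = some L) :
    R.vtx t = (par T)^[K] (T.leaf L) ∧
      R.newE t = s((par T)^[K] (T.leaf L), (par T)^[K+1] (T.leaf L)) := by
  obtain ⟨k, hk, hek⟩ := (hiff f).mp hlab
  set ℓ := T.leaf L with hldef
  have hvcase : R.vtx t = (par T)^[k] ℓ ∨ R.vtx t = (par T)^[k+1] ℓ := by
    rw [hek] at hvf
    rcases Sym2.mem_iff.mp hvf with h | h
    · exact Or.inl h
    · exact Or.inr h
  rcases hvcase with h | h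
  · exfalso
    apply hfne
    rw [hek, hadv, h]
    rw [Function.iterate_succ_apply' (par T) k]
  · have hppar : (par T)^[k+1+1] ℓ = par T (R.vtx t) := by
      rw [Function.iterate_succ_apply' (par T) (k+1), ← h]
    have hkK : k + 1 = K := by
      by_contra hne
      have hk1K : k + 1 < K := by omega
      have hglab : R.lab t.1 s((par T)^[k+1] ℓ, (par T)^[k+1+1] ℓ) = some L :=
        (hiff _).mpr ⟨k+1, hk1K, rfl⟩
      have hEe : s((par T)^[k+1] ℓ, (par T)^[k+1+1] ℓ) = R.newE t := by
        rw [hadv, ← h, hppar]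
      rw [hEe, R.newE_unlabeled t] at hglab
      exact nomatch hglab
    subst hkK
    exact ⟨h, by rw [hadv, ← h, hppar]⟩

end Run3
end Pt
namespace Pt
open SimpleGraph
set_option linter.unusedSectionVars false
set_option maxHeartbeats 1000000

variable {n : ℕ}

section Run4
variable (T : PreTree (n+3) (2*n+4)) (hT : T.IsTrivalent) (hab : T.ABAdj) (R : Run n T)
include hT hab

lemma good_step_core (t : Fin n) (hG : GoodInv T hab R t.1)
    (hadv : R.newE t = s(R.vtx t, par T (R.vtx t))) (hvrt : R.vtx t ≠ rt T)
    {L : Fin (n+3)} {E_L : Sym2 (Fin (2*n+4))}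
    (hL2 : 2 ≤ (L : ℕ)) (hELv : R.vtx t ∈ E_L) (hELne : E_L ≠ R.newE t)
    (hEl : R.lab t.1 E_L = some L) (hnew : R.lab (t.1+1) (R.newE t) = some L) :
    GoodInv T hab R (t.1+1) := by
  obtain ⟨K, hK1, hKd, hiff⟩ := hG.2.2 L hL2
  obtain ⟨hvtop, hnewe⟩ := top_edge T hT hab R t hG hadv hK1 hKd hiff hELv hELne hEl
  set ℓ := T.leaf L with hldef
  have hnewlab := R.newE_unlabeled t
  have hK1d : K + 1 ≤ dd T ℓ := by
    have h1 : dd T ((par T)^[K] ℓ) = dd T ℓ - K := dd_iter T hT K hKd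
    have h2 : (par T)^[K] ℓ ≠ rt T := by rw [← hvtop]; exact hvrt
    have h3 : dd T ((par T)^[K] ℓ) ≠ 0 := fun hh => h2 ((dd_eq_zero T hT).mp hh)
    omega
  refine ⟨fun e => ?_, fun e => ?_, fun i hi2 => ?_⟩
  · by_cases he : e = R.newE t
    · subst he
      apply iff_of_false
      · rw [hnew]
        intro hh
        have : L = 0 := Option.some.inj hh
        rw [this] at hL2
        simp at hL2
      · intro hh
        have : R.lab t.1 (aE T hab) = some 0 := (hG.1 _).mpr rfl
        rw [← hh, hnewlab] at this
        exact nomatch this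
    · rw [R.step_frame t e he]
      exact hG.1 e
  · by_cases he : e = R.newE t
    · subst he
      apply iff_of_false
      · rw [hnew]
        intro hh
        have hl1 : L = 1 := Option.some.inj hh
        rw [hl1] at hL2
        have : ((1 : Fin (n+3)) : ℕ) = 1 := rfl
        omega
      · intro hh
        have : R.lab t.1 (bE T hab) = some 1 := (hG.2.1 _).mpr rfl
        rw [← hh, hnewlab] at this
        exact nomatch this
    · rw [R.step_frame t e he]
      exact hG.2.1 e
  · by_cases hiL : i = L
    · subst hiL
      refine ⟨K + 1, by omega, hK1d, fun e => ?_⟩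
      by_cases he : e = R.newE t
      · subst he
        apply iff_of_true
        · exact hnew
        · exact ⟨K, by omega, hnewe⟩
      · rw [R.step_frame t e he]
        constructor
        · intro hl
          obtain ⟨k, hk, hek⟩ := (hiff e).mp hl
          exact ⟨k, by omega, hek⟩
        · rintro ⟨k, hk, hek⟩
          rcases Nat.lt_or_ge k K with hkK | hkK
          · exact (hiff e).mpr ⟨k, hkK, hek⟩
          · exfalso
            have hkeq : k = K := by omega
            subst hkeq
            rw [← hnewe] at hek
            exact he hek
    · obtain ⟨Ki, hKi1, hKid, hiffi⟩ := hG.2.2 i hi2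
      refine ⟨Ki, hKi1, hKid, fun e => ?_⟩
      by_cases he : e = R.newE t
      · subst he
        apply iff_of_false
        · rw [hnew]
          intro hh
          exact hiL (Option.some.inj hh).symm
        · rintro ⟨k, hk, hek⟩
          have : R.lab t.1 (R.newE t) = some i := (hiffi _).mpr ⟨k, hk, hek⟩
          rw [hnewlab] at this
          exact nomatch this
      · rw [R.step_frame t e he]
        exact hiffi e

lemma good_step (t : Fin n) (hG : GoodInv T hab R t.1) :
    GoodInv T hab R (t.1+1) ∧ 2 ≤ (R.loser t : ℕ) ∧
      R.newE t = s(R.vtx t, par T (R.vtx t)) ∧ R.vtx t ≠ rt T := by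
  have hl2 := find T hT hab R t hG
  obtain ⟨hvrt, hdeg, hadv⟩ := advance T hT hab R t hG hl2
  have hw2 : 2 ≤ (R.winner t : ℕ) := by
    have := R.lt_lw t
    rw [Fin.lt_def] at this
    omega
  refine ⟨?_, hl2, hadv, hvrt⟩
  rcases Classical.em (LazyApplies T (R.lab t.1) (R.newE t) (R.loser t) (R.winner t)) with hlz | hlz
  · exact good_step_core T hT hab R t hG hadv hvrt hl2 (R.vtx_mem t).1
      (R.edges_distinct t).2.1 (R.lab_loserE t) (R.step_lazy t hlz)
  · exact good_step_core T hT hab R t hG hadv hvrt hw2 (R.vtx_mem t).2.1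
      (R.edges_distinct t).2.2 (R.lab_winnerE t) (R.step_nonlazy t hlz)

lemma good_all : ∀ t, t ≤ n → GoodInv T hab R t := by
  intro t
  induction t with
  | zero => intro _; exact good_zero T hT hab R
  | succ m ih =>
    intro hm
    have hmn : m < n := by omega
    exact (good_step T hT hab R ⟨m, hmn⟩ (ih (by omega))).1

lemma round_facts (t : Fin n) :
    2 ≤ (R.loser t : ℕ) ∧ R.newE t = s(R.vtx t, par T (R.vtx t)) ∧ R.vtx t ≠ rt T := by
  have hG := good_all T hT hab R t.1 (le_of_lt t.2)
  obtain ⟨_, h2, h3, h4⟩ := good_step T hT hab R t hG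
  exact ⟨h2, h3, h4⟩

end Run4
end Pt
namespace Pt
open SimpleGraph
set_option linter.unusedSectionVars false
set_option maxHeartbeats 1000000

variable {n : ℕ}

section Run5
variable (T : PreTree (n+3) (2*n+4)) (hT : T.IsTrivalent) (hab : T.ABAdj) (R : Run n T)

/-- canonical neighbor of each leaf -/
noncomputable def nbL (i : Fin (n+3)) : Fin (2*n+4) :=
  if i = 0 then wv T hab else par T (T.leaf i)

def labeled (t : ℕ) : Finset (Sym2 (Fin (2*n+4))) :=
  Finset.univ.filter (fun e => R.lab t e ≠ none)

lemma mem_labeled {t e} : e ∈ labeled T R t ↔ R.lab t e ≠ none := by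
  simp [labeled]

include hT hab

lemma nbL_adj (i : Fin (n+3)) : T.G.Adj (T.leaf i) (nbL T hab i) := by
  by_cases h : i = 0
  · subst h
    rw [nbL, if_pos rfl]
    exact w_adj0 T hT hab
  · rw [nbL, if_neg h]
    exact par_leaf_adj T hT hab h

lemma adj_leaf_eq_nbL {i : Fin (n+3)} {x} (h : T.G.Adj (T.leaf i) x) : x = nbL T hab i := by
  by_cases hi : i = 0
  · subst hi
    rw [nbL, if_pos rfl]
    exact adj_rt_eq_w T hT hab h
  · rw [nbL, if_neg hi]
    exact adj_leaf_eq_par T hT hab hi h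

lemma labeled_zero_eq :
    labeled T R 0 = Finset.image (fun i : Fin (n+3) => s(T.leaf i, nbL T hab i)) Finset.univ := by
  ext e
  rw [mem_labeled]
  simp only [Finset.mem_image, Finset.mem_univ, true_and]
  constructor
  · intro h
    obtain ⟨j, hj⟩ := Option.ne_none_iff_exists'.mp h
    obtain ⟨he, hm⟩ := (lab_zero_iff T hT hab R).mp hj
    obtain ⟨x, hx, hex⟩ := edge_other T he hm
    refine ⟨j, ?_⟩
    rw [hex, adj_leaf_eq_nbL T hT hab hx]
  · rintro ⟨i, rfl⟩
    rw [R.init_leaf i _ (nbL_adj T hT hab i)]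
    simp

lemma card_labeled_zero : (labeled T R 0).card = n + 3 := by
  rw [labeled_zero_eq T hT hab R,
    Finset.card_image_of_injective _ ?_, Finset.card_univ, Fintype.card_fin]
  intro i j h
  rcases Sym2.eq_iff.mp h with ⟨h1, _⟩ | ⟨h1, h2⟩
  · exact leaf_inj T hT h1
  · exfalso
    have hadj := nbL_adj T hT hab j
    rw [← h1] at hadj
    exact leaves_not_adj T hT hab j i hadj

lemma labeled_succ (t : Fin n) : labeled T R (t.1+1) = insert (R.newE t) (labeled T R t.1) := by
  ext e
  rw [mem_labeled, Finset.mem_insert, mem_labeled]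
  by_cases he : e = R.newE t
  · subst he
    apply iff_of_true
    · rcases Classical.em (LazyApplies T (R.lab t.1) (R.newE t) (R.loser t) (R.winner t)) with hlz | hlz
      · rw [R.step_lazy t hlz]; simp
      · rw [R.step_nonlazy t hlz]; simp
    · exact Or.inl rfl
  · rw [R.step_frame t e he]
    simp [he]

lemma card_labeled : ∀ t, t ≤ n → (labeled T R t).card = n + 3 + t := by
  intro t
  induction t with
  | zero => intro _; simpa using card_labeled_zero T hT hab R
  | succ m ih =>
    intro hm
    have hmn : m < n := by omega
    rw [labeled_succ T hT hab R ⟨m, hmn⟩]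
    rw [Finset.card_insert_of_notMem (by
      rw [mem_labeled]
      simp [R.newE_unlabeled ⟨m, hmn⟩])]
    rw [ih (by omega)]
    omega

lemma all_labeled {e} (he : e ∈ T.G.edgeSet) : R.lab n e ≠ none := by
  have hsub : labeled T R n ⊆ T.G.edgeFinset := by
    intro x hx
    rw [mem_labeled] at hx
    rw [mem_edgeFinset]
    by_contra hc
    exact hx (lab_nonedge T hT hab R le_rfl hc)
  have hc1 : (labeled T R n).card = 2*n+3 := by
    rw [card_labeled T hT hab R n le_rfl]; omega
  have hc2 : (T.G.edgeFinset).card = 2*n+3 := by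
    have h := hT.1.card_edgeFinset
    have h2 : Fintype.card (Fin (2*n+4)) = 2*n+4 := Fintype.card_fin _
    omega
  have heq : labeled T R n = T.G.edgeFinset :=
    Finset.eq_of_subset_of_card_le hsub (by omega)
  have : e ∈ labeled T R n := by
    rw [heq, mem_edgeFinset]
    exact he
  rwa [mem_labeled] at this

lemma exists_newE_round {e} (he : e ∈ T.G.edgeSet) (h0 : R.lab 0 e = none) :
    ∃ s : Fin n, R.newE s = e := by
  suffices h : ∀ t, t ≤ n → R.lab t e ≠ none → ∃ s : Fin n, R.newE s = e by
    exact h n le_rfl (all_labeled T hT hab R he)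
  intro t
  induction t with
  | zero => intro _ hc; exact absurd h0 hc
  | succ m ih =>
    intro hm hne
    have hmn : m < n := by omega
    by_cases hl : R.lab m e ≠ none
    · exact ih (by omega) hl
    · push_neg at hl
      by_cases hee : e = R.newE ⟨m, hmn⟩
      · exact ⟨⟨m, hmn⟩, hee.symm⟩
      · rw [R.step_frame ⟨m, hmn⟩ e hee] at hne
        exact absurd hl hne

end Run5
end Pt
namespace Pt
open SimpleGraph
set_option linter.unusedSectionVars false
set_option maxHeartbeats 1000000

variable {n : ℕ}

section Run6
variable (T : PreTree (n+3) (2*n+4)) (hT : T.IsTrivalent) (hab : T.ABAdj) (R : Run n T)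
include hT hab

lemma competes (hn : 1 ≤ n) (i : Fin (n+3)) (hi0 : i ≠ 0) (hi1 : i ≠ 1) :
    ∃ t : Fin n, R.loser t = i ∨ R.winner t = i := by
  set ℓ := T.leaf i with hldef
  have hlrt : ℓ ≠ rt T := leaf_ne_rt T hT hi0
  set v := par T ℓ with hvdef
  have hadjlv : T.G.Adj ℓ v := par_leaf_adj T hT hab hi0
  have hddlv : dd T v + 1 = dd T ℓ := dd_par T hT hlrt
  have hvrt : v ≠ rt T := by
    intro h
    have hadj : T.G.Adj (rt T) ℓ := by rw [← h]; exact hadjlv.symm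
    have := adj_rt_eq_w T hT hab hadj
    exact w_not_leaf T hT hab i this.symm
  have hddv1 : 1 ≤ dd T v := by
    have : dd T v ≠ 0 := fun h => hvrt ((dd_eq_zero T hT).mp h)
    omega
  -- v is not the special vertex w
  have hvw : v ≠ wv T hab := by
    intro hvw
    have hadjlw : T.G.Adj ℓ (wv T hab) := by rw [← hvw]; exact hadjlv
    -- pick a fourth leaf j ∉ {0, 1, i}
    have h3lt : 3 < n + 3 := by omega
    have h2lt : 2 < n + 3 := by omega
    set j : Fin (n+3) := if (i : ℕ) = 2 then ⟨3, h3lt⟩ else ⟨2, h2lt⟩ with hjdef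
    have hjv : (j : ℕ) = 2 ∨ (j : ℕ) = 3 := by
      by_cases hc : (i : ℕ) = 2 <;> simp [hjdef, hc]
    have hji : j ≠ i := by
      intro hh
      by_cases hc : (i : ℕ) = 2
      · rw [hjdef, if_pos hc] at hh
        have : (i : ℕ) = 3 := by rw [← hh]
        omega
      · rw [hjdef, if_neg hc] at hh
        have : (i : ℕ) = 2 := by rw [← hh]
        omega
    have hj0 : j ≠ 0 := by
      intro hh
      have : (j : ℕ) = 0 := by rw [hh]; rfl
      omega
    have hj1 : j ≠ 1 := by
      intro hh
      have : (j : ℕ) = 1 := by rw [hh]; rfl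
      omega
    set lj := T.leaf j with hljdef
    set k := dd T lj with hkdef
    have hk1 : 1 ≤ k := dd_leaf_pos T hT hj0
    have hiterrt : (par T)^[k] lj = rt T := iter_rt T hT lj
    obtain ⟨k1, hk1e⟩ : ∃ k1, k = k1 + 1 := ⟨k - 1, by omega⟩
    have hcadj : T.G.Adj ((par T)^[k1] lj) ((par T)^[k1+1] lj) :=
      iter_adj T hT (by omega)
    have hcw : (par T)^[k1] lj = wv T hab := by
      apply adj_rt_eq_w T hT hab
      rw [← hiterrt, hk1e]
      exact hcadj.symm
    rcases Nat.eq_zero_or_pos k1 with hk10 | hk1pos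
    · subst hk10
      simp only [Function.iterate_zero, id_eq] at hcw
      exact w_not_leaf T hT hab j hcw.symm
    obtain ⟨k2, hk2e⟩ : ∃ k2, k1 = k2 + 1 := ⟨k1 - 1, by omega⟩
    set x := (par T)^[k2] lj with hxdef
    have hxw : par T x = wv T hab := by
      rw [← hcw, hk2e, hxdef, Function.iterate_succ_apply' (par T) k2]
    have hxrt : x ≠ rt T := iter_ne_rt T hT (by omega)
    have hxadjw : T.G.Adj x (wv T hab) := by rw [← hxw]; exact par_adj T hT hxrt
    have hddx : dd T x = 2 := by
      have := dd_iter T hT (v := lj) k2 (by omega)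
      rw [← hxdef] at this
      omega
    have hddl1 : dd T (T.leaf 1) = 2 := by
      have h1 := dd_par T hT (leaf_ne_rt T hT (i := 1) (by
        intro hh
        have : ((1 : Fin (n+3)) : ℕ) = 0 := by rw [hh]; rfl
        simp at this))
      rw [par_leaf1 T hT hab, dd_w T hT hab] at h1
      omega
    -- x is a neighbor of w distinct from rt; neighbors of w are rt, leaf 1, ℓ
    have hx_cases : x = rt T ∨ x = T.leaf 1 ∨ x = ℓ := by
      by_contra hcon
      push_neg at hcon
      obtain ⟨hx1, hx2, hx3⟩ := hcon
      have hdw := deg_w T hT hab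
      have hrtw : T.G.Adj (wv T hab) (rt T) := (w_adj0 T hT hab).symm
      have hl1w : T.G.Adj (wv T hab) (T.leaf 1) := (w_adj1 T hT hab).symm
      have hlw : T.G.Adj (wv T hab) ℓ := hadjlw.symm
      have hxw' : T.G.Adj (wv T hab) x := hxadjw.symm
      have hne1 : rt T ≠ T.leaf 1 := (leaf_ne_rt T hT (i := 1) (by
        intro hh
        have : ((1 : Fin (n+3)) : ℕ) = 0 := by rw [hh]; rfl
        simp at this)).symm
      have hne2 : rt T ≠ ℓ := (leaf_ne_rt T hT hi0).symm
      have hne3 : T.leaf 1 ≠ ℓ := fun h => hi1 (leaf_inj T hT h).symm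
      have hsub : ({x, rt T, T.leaf 1, ℓ} : Finset (Fin (2*n+4))) ⊆
          T.G.neighborFinset (wv T hab) := by
        intro y hy
        simp only [Finset.mem_insert, Finset.mem_singleton] at hy
        rcases hy with rfl | rfl | rfl | rfl <;> rwa [mem_neighborFinset]
      have hcard : ({x, rt T, T.leaf 1, ℓ} : Finset (Fin (2*n+4))).card = 4 := by
        rw [Finset.card_insert_of_notMem (by simp [hx1, hx2, hx3]),
          Finset.card_insert_of_notMem (by simp [hne1, hne2]),
          Finset.card_insert_of_notMem (by simp [hne3]), Finset.card_singleton]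
      have hge : 4 ≤ T.G.degree (wv T hab) := by
        rw [← card_neighborFinset_eq_degree]
        calc 4 = ({x, rt T, T.leaf 1, ℓ} : Finset (Fin (2*n+4))).card := hcard.symm
        _ ≤ _ := Finset.card_le_card hsub
      omega
    -- each case is impossible
    rcases hx_cases with hx | hx | hx
    · rw [hx, dd_rt T hT] at hddx
      omega
    · -- x = leaf 1 : a leaf with two neighbors unless x = lj
      rcases Nat.eq_zero_or_pos k2 with hk20 | hk2pos
      · rw [hk20] at hxdef
        simp only [Function.iterate_zero, id_eq] at hxdef
        rw [hxdef] at hx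
        exact hj1 (leaf_inj T hT hx)
      · obtain ⟨k3, hk3e⟩ : ∃ k3, k2 = k3 + 1 := ⟨k2 - 1, by omega⟩
        have hyrt : (par T)^[k3] lj ≠ rt T := iter_ne_rt T hT (by omega)
        have hyadj : T.G.Adj ((par T)^[k3] lj) x := by
          rw [hxdef, hk3e, Function.iterate_succ_apply' (par T) k3]
          exact par_adj T hT hyrt
        have hxleaf : T.G.degree x = 1 := by rw [hx]; exact deg_leaf T hT 1
        have : (par T)^[k3] lj = wv T hab :=
          unique_nbr T hxleaf hyadj.symm hxadjw
        have hddy : dd T ((par T)^[k3] lj) = 3 := by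
          have := dd_iter T hT (v := lj) k3 (by omega)
          omega
        rw [this, dd_w T hT hab] at hddy
        omega
    · -- x = ℓ : same argument
      rcases Nat.eq_zero_or_pos k2 with hk20 | hk2pos
      · rw [hk20] at hxdef
        simp only [Function.iterate_zero, id_eq] at hxdef
        rw [hxdef] at hx
        exact hji (leaf_inj T hT hx)
      · obtain ⟨k3, hk3e⟩ : ∃ k3, k2 = k3 + 1 := ⟨k2 - 1, by omega⟩
        have hyrt : (par T)^[k3] lj ≠ rt T := iter_ne_rt T hT (by omega)
        have hyadj : T.G.Adj ((par T)^[k3] lj) x := by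
          rw [hxdef, hk3e, Function.iterate_succ_apply' (par T) k3]
          exact par_adj T hT hyrt
        have hxleaf : T.G.degree x = 1 := by rw [hx, hldef]; exact deg_leaf T hT i
        have : (par T)^[k3] lj = wv T hab :=
          unique_nbr T hxleaf hyadj.symm hxadjw
        have hddy : dd T ((par T)^[k3] lj) = 3 := by
          have := dd_iter T hT (v := lj) k3 (by omega)
          omega
        rw [this, dd_w T hT hab] at hddy
        omega
  -- v has degree 3
  have hdegv : T.G.degree v = 3 := by
    rcases hT.2.1 v with h1 | h3
    · exfalso
      have hpv : ℓ = par T v :=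
        unique_nbr T h1 hadjlv.symm (par_adj T hT hvrt)
      have := dd_par T hT hvrt
      rw [← hpv] at this
      omega
    · exact h3
  -- the parent edge of v contains no leaf
  have hnoleaf : ∀ m : Fin (n+3), T.leaf m ∉ s(v, par T v) := by
    intro m hm
    rcases Sym2.mem_iff.mp hm with h | h
    · have h1 := deg_leaf T hT m
      rw [h] at h1
      omega
    · by_cases hm0 : m = 0
      · subst hm0
        have hpvrt : par T v = rt T := h.symm
        have : T.G.Adj (rt T) v := by
          rw [← hpvrt]
          exact (par_adj T hT hvrt).symm
        exact hvw (adj_rt_eq_w T hT hab this)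
      · have hadj2 : T.G.Adj (T.leaf m) v := by
          rw [h]
          exact (par_adj T hT hvrt).symm
        have hveq : v = par T (T.leaf m) := adj_leaf_eq_par T hT hab hm0 hadj2
        have hmrt : T.leaf m ≠ rt T := leaf_ne_rt T hT hm0
        have hd1 := dd_par T hT hmrt
        have hd2 := dd_par T hT hvrt
        rw [← hveq] at hd1
        rw [← h] at hd2
        omega
  have he_up_mem : s(v, par T v) ∈ T.G.edgeSet := (T.G.mem_edgeSet).mpr (par_adj T hT hvrt)
  have h0 : R.lab 0 s(v, par T v) = none := R.init_other _ hnoleaf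
  obtain ⟨s, hs⟩ := exists_newE_round T hT hab R he_up_mem h0
  obtain ⟨hl2s, hadvs, hvrts⟩ := round_facts T hT hab R s
  have hvs : R.vtx s = v := by
    have hvin : R.vtx s ∈ s(v, par T v) := by rw [← hs]; exact (R.vtx_mem s).2.2
    rcases Sym2.mem_iff.mp hvin with h | h
    · exact h
    · exfalso
      have hpvrt : par T v ≠ rt T := by rw [← h]; exact hvrts
      have heq : s(v, par T v) = s(par T v, par T (par T v)) := by
        rw [← hs, hadvs, h]
      rcases Sym2.eq_iff.mp heq with ⟨q1, q2⟩ | ⟨q1, q2⟩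
      · have := dd_par T hT hvrt
        rw [← q1] at this
        omega
      · have hd1 := dd_par T hT hvrt
        have hd2 := dd_par T hT hpvrt
        rw [← q1] at hd2
        omega
  have hlemem : s(ℓ, v) ∈ T.G.edgeSet := (T.G.mem_edgeSet).mpr hadjlv
  have hlev : R.vtx s ∈ s(ℓ, v) := by rw [hvs]; exact Sym2.mem_mk_right _ _
  have hlene : s(ℓ, v) ≠ R.newE s := by
    rw [hs]
    intro hq
    rcases Sym2.eq_iff.mp hq with ⟨q1, _⟩ | ⟨q1, _⟩
    · have h1 := deg_leaf T hT i
      rw [← hldef, q1] at h1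
      omega
    · exact hnoleaf i (by rw [← hldef, q1]; exact Sym2.mem_mk_right _ _)
  obtain ⟨hvL, hvW, hvN⟩ := R.vtx_mem s
  obtain ⟨hLW, hLN, hWN⟩ := R.edges_distinct s
  have hlabs : R.lab s.1 s(ℓ, v) = some i :=
    lab_mono T hT hab R (Nat.zero_le _) (le_of_lt s.2) (R.init_leaf i v hadjlv)
  rcases edge_mem_three T hT (R.loserE_mem s) (R.winnerE_mem s) (R.newE_mem s) hlemem
      hvL hvW hvN hlev hLW hLN hWN with hq | hq | hq
  · refine ⟨s, Or.inl ?_⟩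
    have := R.lab_loserE s
    rw [← hq, hlabs] at this
    exact (Option.some.inj this).symm
  · refine ⟨s, Or.inr ?_⟩
    have := R.lab_winnerE s
    rw [← hq, hlabs] at this
    exact (Option.some.inj this).symm
  · exact absurd hq hlene

end Run6
end Pt
/-- **Participation Lemma.** In the lazy tournament of a trivalent tree whose
leaf edges `a`, `b` share a vertex (`n ≥ 1`): neither `a` nor `b` ever competes, every other
label competes in some round, and a label always advances along its path toward the leaf `a`
(the newly labeled edge lies on the path from the current vertex to `a`). -/
theorem participation (n : ℕ) (hn : 1 ≤ n) (T : PreTree (n+3) (2*n+4))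
    (hT : T.IsTrivalent) (hab : T.ABAdj) (R : Run n T) :
    (∀ t : Fin n, R.loser t ≠ 0 ∧ R.winner t ≠ 0 ∧ R.loser t ≠ 1 ∧ R.winner t ≠ 1) ∧
    (∀ i : Fin (n+3), i ≠ 0 → i ≠ 1 → ∃ t : Fin n, R.loser t = i ∨ R.winner t = i) ∧
    (∀ t : Fin n, ∀ p : T.G.Walk (R.vtx t) (T.leaf 0), p.IsPath → R.newE t ∈ p.edges) := by
  refine ⟨fun t => ?_, fun i hi0 hi1 => Pt.competes T hT hab R hn i hi0 hi1,
    fun t p hp => ?_⟩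
  · obtain ⟨hl2, _, _⟩ := Pt.round_facts T hT hab R t
    have hw2 : 2 ≤ (R.winner t : ℕ) := by
      have := R.lt_lw t
      rw [Fin.lt_def] at this
      omega
    have h0v : ((0 : Fin (n+3)) : ℕ) = 0 := rfl
    have h1v : ((1 : Fin (n+3)) : ℕ) = 1 := rfl
    refine ⟨fun h => ?_, fun h => ?_, fun h => ?_, fun h => ?_⟩
    · rw [h] at hl2; omega
    · rw [h] at hw2; omega
    · rw [h] at hl2; omega
    · rw [h] at hw2; omega
  · obtain ⟨_, hadv, hvrt⟩ := Pt.round_facts T hT hab R t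
    have hp2 : p = Pt.cw T hT (R.vtx t) := Pt.path_eq_cw T hT p hp
    rw [hp2, hadv]
    exact Pt.cw_first_edge T hT hvrt
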